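/- Let G be a full and flexible group of homeomorphisms of Cantor space X, and let N denote the normalizer of G in Homeo(X). If h ∈ Homeo(X) satisfies h⁻¹Nh ⊆ N, then h⁻¹Gh ⊆ G. -/

import Mathlib

open Set

open scoped Classical

/-- The group structure on self-homeomorphisms of a topological space,
with `(f * g) x = f (g x)`. -/
instance homeoGroup {X : Type*} [TopologicalSpace X] : Group (X ≃ₜ X) where
  mul f g := g.trans f
  one := Homeomorph.refl X
  inv := Homeomorph.symm
  mul_assoc f g h := Homeomorph.ext fun _ => rfl
  one_mul f := Homeomorph.ext fun _ => rfl
  mul_one f := Homeomorph.ext fun _ => rfl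
  inv_mul_cancel f := Homeomorph.ext fun x => f.symm_apply_apply x

/-- Cantor space, realized concretely as `{0,1}^ℕ`. -/
abbrev Cantor : Type := ℕ → Bool

/-- `h` locally agrees with the group `G`: every point has an open neighbourhood
on which `h` coincides with some element of `G`. -/
def LocallyAgrees {X : Type*} [TopologicalSpace X] (G : Subgroup (X ≃ₜ X)) (h : X ≃ₜ X) : Prop :=
  ∀ x : X, ∃ U : Set X, IsOpen U ∧ x ∈ U ∧ ∃ g ∈ G, Set.EqOn (⇑h) (⇑g) U

/-- `G` is a full group of homeomorphisms. -/
def IsFull {X : Type*} [TopologicalSpace X] (G : Subgroup (X ≃ₜ X)) : Prop :=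
  ∀ h : X ≃ₜ X, LocallyAgrees G h → h ∈ G

/-- `G` is flexible: any proper closed set with nonempty interior can be mapped
into any other by some element of `G`. -/
def IsFlexible {X : Type*} [TopologicalSpace X] (G : Subgroup (X ≃ₜ X)) : Prop :=
  ∀ E₁ E₂ : Set X, IsClosed E₁ → E₁ ≠ Set.univ → (interior E₁).Nonempty →
    IsClosed E₂ → E₂ ≠ Set.univ → (interior E₂).Nonempty →
    ∃ g ∈ G, g '' E₁ ⊆ E₂

/-- The support of a homeomorphism: the closure of its set of moved points. -/
def supp {X : Type*} [TopologicalSpace X] (g : X ≃ₜ X) : Set X :=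
  closure {x | g x ≠ x}

/-- `g` has small support: it is the identity off a proper closed subset. -/
def HasSmallSupport {X : Type*} [TopologicalSpace X] (g : X ≃ₜ X) : Prop :=
  ∃ U : Set X, IsClosed U ∧ U ≠ Set.univ ∧ ∀ x ∉ U, g x = x

/-! ### Auxiliary material -/

lemma coe_mul' (a b : Cantor ≃ₜ Cantor) (x : Cantor) : (a * b) x = a (b x) := rfl

lemma coe_inv' (a : Cantor ≃ₜ Cantor) (x : Cantor) : a⁻¹ x = a.symm x := rfl

lemma coe_one' (x : Cantor) : (1 : Cantor ≃ₜ Cantor) x = x := rfl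

/-- The swap function: `g` on `A`, `g⁻¹` on `g(A)`, identity elsewhere. -/
noncomputable def swapFun (g : Cantor ≃ₜ Cantor) (A : Set Cantor) : Cantor → Cantor :=
  A.piecewise ⇑g ((⇑g.symm ⁻¹' A).piecewise ⇑g.symm id)

lemma swapFun_of_mem (g : Cantor ≃ₜ Cantor) {A : Set Cantor} {x : Cantor} (hx : x ∈ A) :
    swapFun g A x = g x := Set.piecewise_eq_of_mem _ _ _ hx

lemma swapFun_of_mem_img (g : Cantor ≃ₜ Cantor) {A : Set Cantor} {x : Cantor}
    (hx : x ∉ A) (hx2 : g.symm x ∈ A) : swapFun g A x = g.symm x := by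
  rw [swapFun, Set.piecewise_eq_of_notMem _ _ _ hx,
    Set.piecewise_eq_of_mem (⇑g.symm ⁻¹' A) _ _ (by simpa using hx2)]

lemma swapFun_of_not_mem (g : Cantor ≃ₜ Cantor) {A : Set Cantor} {x : Cantor}
    (hx : x ∉ A) (hx2 : g.symm x ∉ A) : swapFun g A x = x := by
  rw [swapFun, Set.piecewise_eq_of_notMem _ _ _ hx,
    Set.piecewise_eq_of_notMem (⇑g.symm ⁻¹' A) _ _ (by simpa using hx2), id]

lemma swapFun_involutive (g : Cantor ≃ₜ Cantor) (A : Set Cantor)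
    (hd : ∀ x ∈ A, g x ∉ A) : Function.Involutive (swapFun g A) := by
  intro x
  by_cases hx : x ∈ A
  · rw [swapFun_of_mem g hx, swapFun_of_mem_img g (hd x hx) (by simpa using hx),
      Homeomorph.symm_apply_apply]
  · by_cases hx2 : g.symm x ∈ A
    · rw [swapFun_of_mem_img g hx hx2, swapFun_of_mem g hx2, Homeomorph.apply_symm_apply]
    · rw [swapFun_of_not_mem g hx hx2, swapFun_of_not_mem g hx hx2]

lemma swapFun_continuous (g : Cantor ≃ₜ Cantor) (A : Set Cantor) (hA : IsClopen A) :
    Continuous (swapFun g A) := by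
  have hB : IsClopen (⇑g.symm ⁻¹' A) := hA.preimage g.symm.continuous
  refine Continuous.piecewise (by simp [hA.frontier_eq]) g.continuous ?_
  exact Continuous.piecewise (by simp [hB.frontier_eq]) g.symm.continuous continuous_id

/-- The swap homeomorphism. -/
noncomputable def swapHomeo (g : Cantor ≃ₜ Cantor) (A : Set Cantor) (hA : IsClopen A)
    (hd : ∀ x ∈ A, g x ∉ A) : Cantor ≃ₜ Cantor where
  toEquiv := (swapFun_involutive g A hd).toPerm _
  continuous_toFun := swapFun_continuous g A hA
  continuous_invFun := swapFun_continuous g A hA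

lemma swapHomeo_coe (g : Cantor ≃ₜ Cantor) (A : Set Cantor) (hA : IsClopen A)
    (hd : ∀ x ∈ A, g x ∉ A) : ⇑(swapHomeo g A hA hd) = swapFun g A := rfl

lemma swapHomeo_mem {G : Subgroup (Cantor ≃ₜ Cantor)} (hfull : IsFull G)
    {g : Cantor ≃ₜ Cantor} (hg : g ∈ G) (A : Set Cantor) (hA : IsClopen A)
    (hd : ∀ x ∈ A, g x ∉ A) : swapHomeo g A hA hd ∈ G := by
  apply hfull
  intro x
  by_cases hx : x ∈ A
  · exact ⟨A, hA.isOpen, hx, g, hg, fun y hy => by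
      rw [swapHomeo_coe, swapFun_of_mem g hy]⟩
  · by_cases hx2 : g.symm x ∈ A
    · refine ⟨Aᶜ ∩ ⇑g.symm ⁻¹' A, (hA.compl.inter (hA.preimage g.symm.continuous)).isOpen,
        ⟨hx, hx2⟩, g⁻¹, inv_mem hg, fun y hy => ?_⟩
      rw [swapHomeo_coe, swapFun_of_mem_img g hy.1 hy.2, coe_inv']
    · refine ⟨Aᶜ ∩ ⇑g.symm ⁻¹' Aᶜ, (hA.compl.inter (hA.compl.preimage g.symm.continuous)).isOpen,
        ⟨hx, hx2⟩, 1, one_mem G, fun y hy => ?_⟩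
      rw [swapHomeo_coe, swapFun_of_not_mem g hy.1 hy.2, coe_one']

/-- Key lemma: an element of the normalizer supported on a proper clopen set lies in `G`. -/
lemma mem_of_clopen_support {G : Subgroup (Cantor ≃ₜ Cantor)} (hfull : IsFull G)
    (hflex : IsFlexible G) {f : Cantor ≃ₜ Cantor} (hfN : f ∈ Subgroup.normalizer (G : Set (Cantor ≃ₜ Cantor)))
    {E : Set Cantor} (hE : IsClopen E) (hEuniv : E ≠ Set.univ)
    (hsupp : ∀ x ∉ E, f x = x) : f ∈ G := by
  by_cases hEne : E.Nonempty
  · -- flexibility: move E off itself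
    have hEc_ne : Eᶜ ≠ Set.univ := by
      intro hc
      obtain ⟨x, hx⟩ := hEne
      have : x ∈ Eᶜ := hc ▸ Set.mem_univ x
      exact this hx
    obtain ⟨x₀, hx₀⟩ := Set.ne_univ_iff_exists_notMem E |>.mp hEuniv
    obtain ⟨g₀, hg₀, himg⟩ := hflex E Eᶜ hE.isClosed hEuniv
      (by rw [hE.isOpen.interior_eq]; exact hEne)
      hE.compl.isClosed hEc_ne
      (by rw [hE.compl.isOpen.interior_eq]; exact ⟨x₀, hx₀⟩)
    have hd : ∀ x ∈ E, g₀ x ∉ E := fun x hx => himg ⟨x, hx, rfl⟩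
    set τ := swapHomeo g₀ E hE hd with hτdef
    have hτ : τ ∈ G := swapHomeo_mem hfull hg₀ E hE hd
    have hw : f * τ * f⁻¹ * τ ∈ G :=
      mul_mem ((Subgroup.mem_normalizer_iff.mp hfN τ).mp hτ) hτ
    apply hfull
    intro x
    by_cases hx : x ∈ E
    · refine ⟨E, hE.isOpen, hx, f * τ * f⁻¹ * τ, hw, fun y hy => ?_⟩
      have h1 : τ y = g₀ y := by rw [hτdef, swapHomeo_coe, swapFun_of_mem g₀ hy]
      have h2 : f (g₀ y) = g₀ y := hsupp _ (hd y hy)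
      have h3 : f.symm (g₀ y) = g₀ y := by
        conv_lhs => rw [← h2, Homeomorph.symm_apply_apply]
      have h4 : τ (g₀ y) = y := by
        rw [hτdef, swapHomeo_coe, swapFun_of_mem_img g₀ (hd y hy) (by simpa using hy),
          Homeomorph.symm_apply_apply]
      show f y = (f * τ * f⁻¹ * τ) y
      rw [coe_mul', coe_mul', coe_mul', coe_inv', h1, h3, h4]
    · exact ⟨Eᶜ, hE.compl.isOpen, hx, 1, one_mem G, fun y hy => by
        rw [coe_one']; exact hsupp y hy⟩
  · -- E empty: f is the identity
    rw [Set.not_nonempty_iff_eq_empty] at hEne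
    have : f = 1 := Homeomorph.ext fun x => hsupp x (by simp [hEne])
    rw [this]; exact one_mem G

lemma exists_clopen_sep {p q : Cantor} (h : p ≠ q) :
    ∃ U : Set Cantor, IsClopen U ∧ p ∈ U ∧ q ∉ U := by
  obtain ⟨n, hn⟩ := Function.ne_iff.mp h
  refine ⟨(fun y : Cantor => y n) ⁻¹' {p n},
    ⟨(isClosed_discrete {p n}).preimage (continuous_apply n),
     (isOpen_discrete {p n}).preimage (continuous_apply n)⟩, rfl, by simpa using hn.symm⟩

instance : Infinite Cantor :=
  Infinite.of_injective (fun n : ℕ => (fun m => decide (m = n) : Cantor)) (by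
    intro a b hab
    have := congrFun hab a
    simpa using this.symm)

/-- if `h` conjugates the normalizer `N` of a full and flexible
group `G` into `N`, then `h` conjugates `G` into `G`. -/
theorem conj_normalizer_into_normalizer_conj_group_into_group
    (G : Subgroup (Cantor ≃ₜ Cantor)) (hfull : IsFull G) (hflex : IsFlexible G)
    (h : Cantor ≃ₜ Cantor)
    (hN : ∀ f ∈ Subgroup.normalizer (G : Set (Cantor ≃ₜ Cantor)), h⁻¹ * f * h ∈ Subgroup.normalizer (G : Set (Cantor ≃ₜ Cantor))) :
    ∀ g ∈ G, h⁻¹ * g * h ∈ G := by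
  intro g hg
  by_cases hgid : ∀ x, g x = x
  · have : g = 1 := Homeomorph.ext hgid
    subst this
    have : h⁻¹ * 1 * h = 1 := by group
    rw [this]; exact one_mem G
  · push_neg at hgid
    obtain ⟨p, hp⟩ := hgid
    -- find r distinct from p and g p
    have hfin : ({p, g p} : Set Cantor).Finite := (Set.finite_singleton _).insert _
    obtain ⟨r, hr⟩ := hfin.infinite_compl.nonempty
    have hrp : r ≠ p := fun e => hr (by simp [e])
    have hrgp : r ≠ g p := fun e => hr (by simp [e])
    -- build V
    obtain ⟨U₁, hU₁, hpU₁, hgpU₁⟩ := exists_clopen_sep (Ne.symm hp)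
    obtain ⟨U₂, hU₂, hpU₂, hrU₂⟩ := exists_clopen_sep (Ne.symm hrp)
    have hgrp : g.symm r ≠ p := by
      intro e
      exact hrgp (by rw [← e, Homeomorph.apply_symm_apply])
    obtain ⟨U₃, hU₃, hpU₃, hgrU₃⟩ := exists_clopen_sep (Ne.symm hgrp)
    set V : Set Cantor := U₁ ∩ U₂ ∩ U₃ ∩ ⇑g ⁻¹' U₁ᶜ with hVdef
    have hV : IsClopen V :=
      ((hU₁.inter hU₂).inter hU₃).inter (hU₁.compl.preimage g.continuous)
    have hpV : p ∈ V := ⟨⟨⟨hpU₁, hpU₂⟩, hpU₃⟩, hgpU₁⟩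
    have hd : ∀ x ∈ V, g x ∉ V := fun x hx hgx => hx.2 hgx.1.1.1
    have hrV : r ∉ V := fun hrv => hrU₂ hrv.1.1.2
    have hgrV : g.symm r ∉ V := fun hgr => hgrU₃ hgr.1.2
    -- the two factors
    set t := swapHomeo g V hV hd with htdef
    have htG : t ∈ G := swapHomeo_mem hfull hg V hV hd
    set b := t * g with hbdef
    have hbG : b ∈ G := mul_mem htG hg
    -- b is the identity on V
    have hbV : ∀ x ∈ V, b x = x := by
      intro x hx
      rw [hbdef, coe_mul', htdef, swapHomeo_coe,
        swapFun_of_mem_img g (hd x hx) (by simpa using hx), Homeomorph.symm_apply_apply]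
    -- t is the identity off V ∪ g.symm ⁻¹' V
    have htsupp : ∀ x, x ∉ V ∪ ⇑g.symm ⁻¹' V → t x = x := by
      intro x hx
      rw [Set.mem_union, not_or] at hx
      rw [htdef, swapHomeo_coe, swapFun_of_not_mem g hx.1 hx.2]
    -- g = t * b
    have hfact : g = t * b := by
      have ht2 : t * t = 1 := Homeomorph.ext fun x => swapFun_involutive g V hd x
      rw [hbdef, ← mul_assoc, ht2, one_mul]
    -- conjugates
    have hfact2 : h⁻¹ * g * h = (h⁻¹ * t * h) * (h⁻¹ * b * h) := by
      rw [hfact]; group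
    rw [hfact2]
    have hGle : G ≤ Subgroup.normalizer (G : Set (Cantor ≃ₜ Cantor)) := Subgroup.le_normalizer
    -- first factor
    have h1 : h⁻¹ * t * h ∈ G := by
      refine mem_of_clopen_support hfull hflex (hN t (hGle htG))
        (E := ⇑h ⁻¹' (V ∪ ⇑g.symm ⁻¹' V))
        ((hV.union (hV.preimage g.symm.continuous)).preimage h.continuous) ?_ ?_
      · intro hc
        have : h (h.symm r) ∈ V ∪ ⇑g.symm ⁻¹' V := by
          have : h.symm r ∈ ⇑h ⁻¹' (V ∪ ⇑g.symm ⁻¹' V) := by rw [hc]; exact Set.mem_univ _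
          exact this
        rw [Homeomorph.apply_symm_apply] at this
        rcases this with h' | h'
        · exact hrV h'
        · exact hgrV h'
      · intro x hx
        show h.symm (t (h x)) = x
        rw [htsupp _ hx, Homeomorph.symm_apply_apply]
    -- second factor
    have h2 : h⁻¹ * b * h ∈ G := by
      refine mem_of_clopen_support hfull hflex (hN b (hGle hbG))
        (E := ⇑h ⁻¹' Vᶜ) (hV.compl.preimage h.continuous) ?_ ?_
      · intro hc
        have : h (h.symm p) ∈ Vᶜ := by
          have : h.symm p ∈ ⇑h ⁻¹' Vᶜ := by rw [hc]; exact Set.mem_univ _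
          exact this
        rw [Homeomorph.apply_symm_apply] at this
        exact this hpV
      · intro x hx
        have hxV : h x ∈ V := by simpa using hx
        show h.symm (b (h x)) = x
        rw [hbV _ hxV, Homeomorph.symm_apply_apply]
    exact mul_mem h1 h2
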